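/- arXiv:1302.2248 — 4 statements merged into one kernel-verified Lean document; each statement's English description precedes it below -/
import Mathlib

section
/- For all integers t ≥ 2 and n ≥ 1, the maximum number of edges of a K_{t+1}-free graph on n vertices equals the number of edges of the Turán graph T_{n,t}, the complete balanced t-partite graph on n vertices. -/
open Filter Topology

attribute [local instance] Classical.propDecidable

/-- `G` contains a copy of `F`. -/
def Contains {α β : Type*} (F : SimpleGraph α) (G : SimpleGraph β) : Prop :=
  ∃ f : α ↪ β, ∀ a b, F.Adj a b → G.Adj (f a) (f b)

/-- Number of edges of a graph. -/
noncomputable def ecard {V : Type*} (G : SimpleGraph V) : ℕ := G.edgeSet.ncard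

/-- The extremal number `ex_n(F)`. -/
noncomputable def exNum (n : ℕ) {α : Type*} (F : SimpleGraph α) : ℕ :=
  sSup {m | ∃ H : SimpleGraph (Fin n), ¬ Contains F H ∧ ecard H = m}

/-- The generalized extremal number `ex_G(F)`. -/
noncomputable def exRel {V α : Type*} (G : SimpleGraph V) (F : SimpleGraph α) : ℕ :=
  sSup {m | ∃ H ≤ G, ¬ Contains F H ∧ ecard H = m}

/-- maximum size of a `t`-colorable subgraph of `G` -/
noncomputable def colRel {V : Type*} (G : SimpleGraph V) (t : ℕ) : ℕ :=
  sSup {m | ∃ H ≤ G, H.Colorable t ∧ ecard H = m}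

/-- probability that `G(n,p)` satisfies `P` -/
noncomputable def gnpProb (n : ℕ) (p : ℝ) (P : SimpleGraph (Fin n) → Prop) : ℝ :=
  ∑ᶠ G : SimpleGraph (Fin n),
    if P G then p ^ ecard G * (1 - p) ^ (n.choose 2 - ecard G) else 0

/-- number of labeled copies of `F` in `G` -/
noncomputable def numCopies {α V : Type*} (F : SimpleGraph α) (G : SimpleGraph V) : ℕ :=
  Set.ncard {f : α ↪ V | ∀ a b, F.Adj a b → G.Adj (f a) (f b)}

/-- expected number of labeled copies of `F` in `G(n,p)` -/
noncomputable def gnpExpCopies (n : ℕ) (p : ℝ) {α : Type*} (F : SimpleGraph α) : ℝ :=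
  ∑ᶠ G : SimpleGraph (Fin n),
    p ^ ecard G * (1 - p) ^ (n.choose 2 - ecard G) * numCopies F G

noncomputable def d2 {V : Type*} {F : SimpleGraph V} (H : F.Subgraph) : ℝ :=
  if 2 < H.verts.ncard then ((H.edgeSet.ncard : ℝ) - 1) / ((H.verts.ncard : ℝ) - 2)
  else 1/2

/-- the 2-density `m₂(F)` -/
noncomputable def m2 {V : Type*} (F : SimpleGraph V) : ℝ :=
  sSup {x | ∃ H : F.Subgraph, H.edgeSet.Nonempty ∧ d2 H = x}

/-- the asymmetric 2-density `m₂(F₁,F₂)` -/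
noncomputable def m2Asym {V W : Type*} (F₁ : SimpleGraph V) (F₂ : SimpleGraph W) : ℝ :=
  sSup {x | ∃ H : F₂.Subgraph, H.edgeSet.Nonempty ∧
    x = (H.edgeSet.ncard : ℝ) / ((H.verts.ncard : ℝ) - 2 + 1 / m2 F₁)}

/-- size of the cut given by a colouring `c` -/
noncomputable def cutSize {V : Type*} (G : SimpleGraph V) {t : ℕ} (c : V → Fin t) : ℕ :=
  Set.ncard {e ∈ G.edgeSet | ¬ (e.map c).IsDiag}

/-- a colouring is balanced if all colour classes have sizes differing by at most one -/
def BalancedPartition {V : Type*} [Fintype V] {t : ℕ} (c : V → Fin t) : Prop :=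
  ∀ i j : Fin t, (Finset.univ.filter fun v => c v = i).card ≤
    (Finset.univ.filter fun v => c v = j).card + 1

open SimpleGraph in
lemma contains_iff_not_cliqueFree {n t : ℕ} (H : SimpleGraph (Fin n)) :
    Contains (completeGraph (Fin (t + 1))) H ↔ ¬ H.CliqueFree (t + 1) := by
  rw [SimpleGraph.not_cliqueFree_iff]
  constructor
  · rintro ⟨f, hf⟩
    exact ⟨⟨⟨f, fun {a b} h => hf a b h⟩, f.injective⟩⟩
  · rintro ⟨f⟩
    exact ⟨f.toEmbedding, fun a b h => f.toHom.map_adj h⟩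

open SimpleGraph in
lemma ecard_eq_card_edgeFinset {V : Type*} (H : SimpleGraph V) [Fintype H.edgeSet] :
    ecard H = H.edgeFinset.card := by
  rw [ecard, Set.ncard_eq_toFinset_card', SimpleGraph.edgeFinset]

/-- Turán's theorem: extremal number of `K_{t+1}` equals the edge count of the Turán graph. -/
theorem stmt0 (t n : ℕ) (ht : 2 ≤ t) (hn : 1 ≤ n) :
    exNum n (SimpleGraph.completeGraph (Fin (t + 1))) = ecard (SimpleGraph.turanGraph n t) := by
  classical
  have ht0 : 0 < t := by omega
  obtain ⟨W, hWd, hW⟩ := SimpleGraph.exists_isTuranMaximal (V := Fin n) (r := t) ht0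
  have hiso : Nonempty (W ≃g SimpleGraph.turanGraph n t) := by
    have := hW.nonempty_iso_turanGraph
    rwa [Fintype.card_fin] at this
  obtain ⟨f⟩ := hiso
  have hWcard : ecard W = ecard (SimpleGraph.turanGraph n t) := by
    rw [ecard_eq_card_edgeFinset, ecard_eq_card_edgeFinset]
    exact SimpleGraph.Iso.card_edgeFinset_eq f
  have hub : ∀ m ∈ {m | ∃ H : SimpleGraph (Fin n), ¬ Contains (SimpleGraph.completeGraph (Fin (t + 1))) H
      ∧ ecard H = m}, m ≤ ecard (SimpleGraph.turanGraph n t) := by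
    rintro m ⟨H, hH, rfl⟩
    rw [contains_iff_not_cliqueFree, not_not] at hH
    rw [ecard_eq_card_edgeFinset, ← hWcard, ecard_eq_card_edgeFinset]
    exact hW.2 hH
  have hmem : ecard (SimpleGraph.turanGraph n t) ∈ {m | ∃ H : SimpleGraph (Fin n),
      ¬ Contains (SimpleGraph.completeGraph (Fin (t + 1))) H ∧ ecard H = m} := by
    refine ⟨SimpleGraph.turanGraph n t, ?_, rfl⟩
    rw [contains_iff_not_cliqueFree, not_not]
    exact SimpleGraph.turanGraph_cliqueFree ht0
  exact le_antisymm (csSup_le ⟨_, hmem⟩ hub) (le_csSup ⟨_, hub⟩ hmem)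
end

section
/- For all integers t ≥ 2 and n ≥ 1, the Turán graph T_{n,t} is, up to isomorphism, the unique K_{t+1}-free graph on n vertices with ex_n(K_{t+1}) edges. -/
open Filter Topology

attribute [local instance] Classical.propDecidable

lemma contains_top_iff {m : ℕ} {V : Type*} (H : SimpleGraph V) :
    Contains (SimpleGraph.completeGraph (Fin m)) H ↔ ¬ H.CliqueFree m := by
  rw [SimpleGraph.not_cliqueFree_iff]
  constructor
  · rintro ⟨f, hf⟩
    exact ⟨⟨⟨f, fun {a b} h => hf a b h⟩, f.injective⟩⟩
  · rintro ⟨f⟩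
    exact ⟨f.toEmbedding, fun a b h => f.toHom.map_adj h⟩

lemma ecard_eq {V : Type*} [Fintype V] (G : SimpleGraph V) [Fintype G.edgeSet] :
    ecard G = G.edgeFinset.card := by
  rw [ecard, SimpleGraph.edgeFinset, Set.ncard_eq_toFinset_card']

/-- Uniqueness in Turán's theorem. -/
theorem stmt1 (t n : ℕ) (ht : 2 ≤ t) (hn : 1 ≤ n) (H : SimpleGraph (Fin n))
    (hfree : ¬ Contains (SimpleGraph.completeGraph (Fin (t + 1))) H)
    (hmax : ecard H = exNum n (SimpleGraph.completeGraph (Fin (t + 1)))) :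
    Nonempty (H ≃g SimpleGraph.turanGraph n t) := by
  rw [contains_top_iff, not_not] at hfree
  have hitm : H.IsTuranMaximal t := by
    refine ⟨hfree, fun H' _ hH' => ?_⟩
    have h1 : ecard H' ≤ exNum n (SimpleGraph.completeGraph (Fin (t + 1))) := by
      apply le_csSup
      · refine ⟨n.choose 2, ?_⟩
        rintro m ⟨G, -, rfl⟩
        rw [ecard_eq]
        simpa using G.card_edgeFinset_le_card_choose_two
      · exact ⟨H', by rw [contains_top_iff, not_not]; exact hH', rfl⟩
    rw [ecard_eq] at h1
    rw [← hmax, ecard_eq] at h1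
    convert h1 using 2
  have := hitm.nonempty_iso_turanGraph
  rwa [Fintype.card_fin] at this
end

section
/- For every ε > 0 there exist δ > 0 and n₀ such that every graph G on n ≥ n₀ vertices containing at most δn³ triangles can be made triangle-free by deleting at most εn² edges. -/
open Filter Topology

attribute [local instance] Classical.propDecidable

/-- Ruzsa–Szemerédi triangle removal lemma. -/
theorem stmt17 (ε : ℝ) (hε : 0 < ε) :
    ∃ δ : ℝ, 0 < δ ∧ ∃ n₀ : ℕ, ∀ n ≥ n₀, ∀ G : SimpleGraph (Fin n),
      (Set.ncard {s : Finset (Fin n) | G.IsNClique 3 s} : ℝ) ≤ δ * (n : ℝ) ^ 3 →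
      ∃ S : Set (Sym2 (Fin n)), S ⊆ G.edgeSet ∧ (S.ncard : ℝ) ≤ ε * (n : ℝ) ^ 2 ∧
        ¬ Contains (SimpleGraph.completeGraph (Fin 3)) (G.deleteEdges S) := by
  set ε' : ℝ := min ε 1 with hε'def
  have hε'0 : 0 < ε' := lt_min hε one_pos
  have hε'1 : ε' ≤ 1 := min_le_right _ _
  refine ⟨SimpleGraph.triangleRemovalBound ε' / 2,
    by positivity, 1, fun n hn G hG ↦ ?_⟩
  have hn0 : (0 : ℝ) < (n : ℝ) ^ 3 := by positivity
  have hcard : (Fintype.card (Fin n) : ℝ) = n := by simp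
  have hset : {s : Finset (Fin n) | G.IsNClique 3 s} = ↑(G.cliqueFinset 3) := by
    ext s; simp [SimpleGraph.mem_cliqueFinset_iff]
  have hG' : ((G.cliqueFinset 3).card : ℝ) <
      SimpleGraph.triangleRemovalBound ε' * (Fintype.card (Fin n) : ℝ) ^ 3 := by
    rw [hcard]
    calc ((G.cliqueFinset 3).card : ℝ) ≤ SimpleGraph.triangleRemovalBound ε' / 2 * n ^ 3 := by
          rw [← Set.ncard_coe_finset, ← hset]; exact hG
      _ < SimpleGraph.triangleRemovalBound ε' * n ^ 3 := by
          have := SimpleGraph.triangleRemovalBound_pos hε'0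
          nlinarith
  have hG'' : (G.cliqueFinset 3).card <
      SimpleGraph.triangleRemovalBound ε' * (Fintype.card (Fin n)) ^ 3 := by
    exact_mod_cast hG'
  obtain ⟨H, hHG, _, hHcard, hHfree⟩ := SimpleGraph.triangle_removal hG''
  refine ⟨G.edgeSet \ H.edgeSet, Set.diff_subset, ?_, ?_⟩
  · have hsub : H.edgeFinset ⊆ G.edgeFinset := SimpleGraph.edgeFinset_mono hHG
    have : (G.edgeSet \ H.edgeSet).ncard = G.edgeFinset.card - H.edgeFinset.card := by
      rw [← Finset.card_sdiff_of_subset hsub, ← Set.ncard_coe_finset (G.edgeFinset \ H.edgeFinset)]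
      congr 1
      simp [Finset.coe_sdiff, SimpleGraph.coe_edgeFinset]
    rw [this]
    have h1 : (G.edgeFinset.card - H.edgeFinset.card : ℝ) < ε' * (Fintype.card (Fin n)) ^ 2 := by
      exact_mod_cast hHcard
    have h2 : ((G.edgeFinset.card - H.edgeFinset.card : ℕ) : ℝ)
        ≤ (G.edgeFinset.card : ℝ) - H.edgeFinset.card := by
      rw [Nat.cast_sub (Finset.card_le_card hsub)]
    have h3 : ε' * ((Fintype.card (Fin n) : ℝ)) ^ 2 ≤ ε * n ^ 2 := by
      rw [hcard]; gcongr; exact min_le_left _ _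
    push_cast at h1 ⊢
    linarith
  · have hdel : G.deleteEdges (G.edgeSet \ H.edgeSet) = H := by
      ext a b
      simp only [SimpleGraph.deleteEdges_adj, Set.mem_diff, SimpleGraph.mem_edgeSet]
      constructor
      · rintro ⟨hab, h⟩
        by_contra hH
        exact h ⟨hab, hH⟩
      · intro h
        exact ⟨hHG h, fun h' ↦ h'.2 h⟩
    rw [hdel]
    rintro ⟨f, hf⟩
    apply hHfree {f 0, f 1, f 2}
    constructor
    · intro a ha b hb hab
      simp only [Finset.coe_insert, Set.mem_insert_iff, Finset.coe_singleton,
        Finset.mem_insert, Finset.mem_singleton] at ha hb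
      obtain (rfl | rfl | rfl) := ha <;> obtain (rfl | rfl | rfl) := hb <;>
        first
          | exact absurd rfl hab
          | exact hf _ _ (by simp [SimpleGraph.completeGraph, f.injective.ne, Fin.ext_iff])
    · rw [Finset.card_insert_of_notMem, Finset.card_insert_of_notMem,
        Finset.card_singleton]
      · simp [f.injective.eq_iff, Fin.ext_iff]
      · simp [f.injective.eq_iff, Fin.ext_iff]
end

section
/- For every graph F with vertex set [ℓ] and every d > 0, there exist ε > 0 and m₀ such that: if H is an ℓ-partite graph with parts V₁, …, V_ℓ of equal size m ≥ m₀ such that for every edge {i,j} of F the pair (V_i, V_j) is ε-regular in H with density at least d, then there exists a graph homomorphism φ: F → H with φ(i) ∈ V_i for all i (a partite copy of F). -/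
open Filter Topology

attribute [local instance] Classical.propDecidable

section
open Finset
variable {α β : Type*}

lemma card_interedges_eq_sum' [DecidableEq α] [DecidableEq β]
    (r : α → β → Prop) [∀ a, DecidablePred (r a)] (s : Finset α) (t : Finset β) :
    (Rel.interedges r s t).card = ∑ x ∈ s, (t.filter fun y => r x y).card := by
  rw [Rel.interedges_eq_biUnion, Finset.card_biUnion]
  · simp
  · intro x _ y _ hxy
    simp only [Finset.disjoint_left, Finset.mem_map, Function.Embedding.coeFn_mk]
    rintro a ⟨u, _, rfl⟩ ⟨v, _, h⟩
    exact hxy (congrArg Prod.fst h).symm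

lemma bad_small [DecidableEq α] (G : SimpleGraph α) [DecidableRel G.Adj]
    {ε d : ℝ} (hε : 0 < ε) {s t C : Finset α}
    (hunif : G.IsUniform ε s t) (hdens : d ≤ (G.edgeDensity s t : ℝ))
    (hC : C ⊆ t) (hCcard : ε * t.card ≤ C.card) (hs : s.Nonempty) (hCne : C.Nonempty) :
    ((s.filter fun x => ((C.filter fun y => G.Adj x y).card : ℝ) < (d - ε) * C.card).card : ℝ)
      < ε * s.card := by
  by_contra hcon
  push_neg at hcon
  set B := s.filter fun x => ((C.filter fun y => G.Adj x y).card : ℝ) < (d - ε) * C.card with hB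
  have hBsub : B ⊆ s := Finset.filter_subset _ _
  have hsc : (0:ℝ) < s.card := by exact_mod_cast Finset.card_pos.2 hs
  have hBne : B.Nonempty := by
    rw [← Finset.card_pos]
    have : (0:ℝ) < B.card := lt_of_lt_of_le (by positivity) hcon
    exact_mod_cast this
  have hCc : (0:ℝ) < C.card := by exact_mod_cast Finset.card_pos.2 hCne
  have h1 := hunif hBsub hC (by rw [mul_comm]; exact hcon) (by rw [mul_comm]; exact hCcard)
  have h2 : (G.edgeDensity s t : ℝ) - ε < (G.edgeDensity B C : ℝ) := by
    have := (abs_lt.1 h1).1; linarith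
  have hupper : (G.edgeDensity B C : ℝ) < d - ε := by
    have hsum : ((G.interedges B C).card : ℝ) < B.card * ((d - ε) * C.card) := by
      have : (G.interedges B C).card = ∑ x ∈ B, (C.filter fun y => G.Adj x y).card :=
        card_interedges_eq_sum' _ _ _
      rw [this]
      push_cast
      calc (∑ x ∈ B, ((C.filter fun y => G.Adj x y).card : ℝ))
          < ∑ _x ∈ B, (d - ε) * C.card := by
            apply Finset.sum_lt_sum_of_nonempty hBne
            intro x hx
            exact (Finset.mem_filter.1 hx).2
        _ = B.card * ((d - ε) * C.card) := by rw [Finset.sum_const, nsmul_eq_mul]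
    have hBc : (0:ℝ) < B.card := by exact_mod_cast Finset.card_pos.2 hBne
    have hed : (G.edgeDensity B C : ℝ) = ((G.interedges B C).card : ℝ) / (B.card * C.card) := by
      rw [SimpleGraph.edgeDensity_def]; push_cast; ring
    rw [hed, div_lt_iff₀ (by positivity)]
    calc ((G.interedges B C).card : ℝ) < B.card * ((d - ε) * C.card) := hsum
      _ = (d - ε) * (B.card * C.card) := by ring
  linarith

end

/-- Embedding lemma for dense regular pairs. -/
theorem stmt19 (ℓ : ℕ) (F : SimpleGraph (Fin ℓ)) (d : ℝ) (hd : 0 < d) :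
    ∃ ε : ℝ, 0 < ε ∧ ∃ m₀ : ℕ, ∀ m ≥ m₀, ∀ H : SimpleGraph (Fin ℓ × Fin m),
      (∀ u v, H.Adj u v → u.1 ≠ v.1) →
      (∀ i j : Fin ℓ, F.Adj i j →
        H.IsUniform ε (Finset.univ.filter fun v => v.1 = i)
          (Finset.univ.filter fun v => v.1 = j) ∧
        d ≤ (H.edgeDensity (Finset.univ.filter fun v => v.1 = i)
          (Finset.univ.filter fun v => v.1 = j) : ℝ)) →
      ∃ φ : Fin ℓ → Fin ℓ × Fin m, (∀ i, (φ i).1 = i) ∧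
        ∀ i j, F.Adj i j → H.Adj (φ i) (φ j) := by
  rcases Nat.eq_zero_or_pos ℓ with rfl | hℓ
  · exact ⟨1, one_pos, 0, fun m _ H _ _ => ⟨fun i => i.elim0, fun i => i.elim0, fun i => i.elim0⟩⟩
  set d' : ℝ := min d 1 with hd'def
  have hd'0 : 0 < d' := lt_min hd one_pos
  have hd'1 : d' ≤ 1 := min_le_right d 1
  set ε : ℝ := (d' / 2) ^ ℓ / (ℓ + 1) with hεdef
  have hε0 : 0 < ε := by positivity
  refine ⟨ε, hε0, 1, fun m hm H hpart hreg => ?_⟩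
  have hm0 : 0 < m := hm
  set δ : ℝ := d' - ε with hδdef
  have hεd2 : ε ≤ d' / 2 := by
    have h1 : (d' / 2) ^ ℓ ≤ (d' / 2) ^ 1 := by
      apply pow_le_pow_of_le_one (by positivity) (by linarith) hℓ
    rw [pow_one] at h1
    calc ε ≤ (d' / 2) ^ ℓ := by
          rw [hεdef, div_le_iff₀ (by positivity)]
          nlinarith [pow_pos (by positivity : (0:ℝ) < d'/2) ℓ, Nat.cast_nonneg (α := ℝ) ℓ]
      _ ≤ d' / 2 := h1
  have hδ0 : 0 < δ := by rw [hδdef]; linarith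
  have hδ1 : δ ≤ 1 := by rw [hδdef]; linarith
  have hδd2 : d' / 2 ≤ δ := by rw [hδdef]; linarith
  -- parts
  set P : Fin ℓ → Finset (Fin ℓ × Fin m) :=
    fun i => Finset.univ.filter fun v => v.1 = i with hPdef
  have hPcard : ∀ i, (P i).card = m := by
    intro i
    have : P i = Finset.univ.map ⟨Prod.mk i, Prod.mk_right_injective i⟩ := by
      ext v
      simp [hPdef, Prod.ext_iff, eq_comm]
    rw [this, Finset.card_map, Finset.card_univ, Fintype.card_fin]
  have hPmem : ∀ i (x : Fin ℓ × Fin m), x ∈ P i ↔ x.1 = i := by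
    intro i x; simp [hPdef]
  have hmpos : (0:ℝ) < m := by exact_mod_cast hm0
  -- candidate set size lower bound
  have hClow : ∀ k : ℕ, k ≤ ℓ → (ℓ + 1 : ℝ) * ε * m ≤ δ ^ k * m := by
    intro k hk
    have h1 : δ ^ ℓ ≤ δ ^ k := pow_le_pow_of_le_one hδ0.le hδ1 hk
    have h2 : (d' / 2) ^ ℓ ≤ δ ^ ℓ := pow_le_pow_left₀ (by positivity) hδd2 ℓ
    have h3 : (ℓ + 1 : ℝ) * ε = (d' / 2) ^ ℓ := by
      rw [hεdef]; field_simp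
    nlinarith
  have default0 : Fin m := ⟨0, hm0⟩
  -- the greedy invariant
  have key : ∀ S : Finset (Fin ℓ), ∃ φ : Fin ℓ → Fin ℓ × Fin m,
      ∃ C : Fin ℓ → Finset (Fin ℓ × Fin m),
      (∀ i, (φ i).1 = i) ∧
      (∀ i ∈ S, ∀ j ∈ S, F.Adj i j → H.Adj (φ i) (φ j)) ∧
      (∀ j ∉ S, C j ⊆ P j ∧
        (δ ^ (S.filter (F.Adj j)).card * m ≤ ((C j).card : ℝ)) ∧
        (∀ i ∈ S, F.Adj i j → ∀ x ∈ C j, H.Adj (φ i) x)) := by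
    intro S
    induction S using Finset.induction_on with
    | empty =>
      refine ⟨fun i => (i, default0), P, fun i => rfl, by simp, fun j _ => ?_⟩
      refine ⟨subset_rfl, ?_, by simp⟩
      simp [hPcard j]
    | @insert a S ha IH =>
      obtain ⟨φ, C, hφ1, hφ2, hφ3⟩ := IH
      -- candidate sets are big
      have hCbig : ∀ j ∉ S, ε * (P j).card ≤ ((C j).card : ℝ) := by
        intro j hj
        obtain ⟨_, h2, _⟩ := hφ3 j hj
        have hk : (S.filter (F.Adj j)).card ≤ ℓ := by
          calc (S.filter (F.Adj j)).card ≤ S.card := Finset.card_filter_le _ _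
            _ ≤ Fintype.card (Fin ℓ) := Finset.card_le_univ S
            _ = ℓ := Fintype.card_fin ℓ
        have := hClow _ hk
        rw [hPcard j]
        nlinarith
      have hCne : ∀ j ∉ S, (C j).Nonempty := by
        intro j hj
        rw [← Finset.card_pos]
        have : (0:ℝ) < (C j).card := by
          have := hCbig j hj
          rw [hPcard j] at this
          nlinarith
        exact_mod_cast this
      -- bad sets
      set N : Finset (Fin ℓ) := Finset.univ.filter fun j => F.Adj a j ∧ j ∉ insert a S with hNdef
      set B : Fin ℓ → Finset (Fin ℓ × Fin m) := fun j =>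
        (C a).filter fun x => (((C j).filter fun y => H.Adj x y).card : ℝ) < δ * (C j).card
        with hBdef
      have hPne : ∀ i, (P i).Nonempty := by
        intro i
        rw [← Finset.card_pos, hPcard i]
        exact hm0
      have hBsmall : ∀ j ∈ N, ((B j).card : ℝ) < ε * m := by
        intro j hj
        rw [hNdef, Finset.mem_filter] at hj
        obtain ⟨-, hadj, hjnot⟩ := hj
        have hjS : j ∉ S := fun h => hjnot (Finset.mem_insert_of_mem h)
        obtain ⟨hunif, hdens⟩ := hreg a j hadj
        obtain ⟨hCsub, -, -⟩ := hφ3 j hjS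
        obtain ⟨hCasub, -, -⟩ := hφ3 a ha
        have hbig :
            ((P a).filter fun x =>
              (((C j).filter fun y => H.Adj x y).card : ℝ) < (d' - ε) * (C j).card).card
              < ε * ((P a).card : ℝ) := by
          refine bad_small H hε0 hunif ?_ hCsub (hCbig j hjS) (hPne a) (hCne j hjS)
          calc d' ≤ d := min_le_left d 1
            _ ≤ _ := hdens
        have hsub : B j ⊆ (P a).filter fun x =>
            (((C j).filter fun y => H.Adj x y).card : ℝ) < (d' - ε) * (C j).card := by
          intro x hx
          rw [hBdef, Finset.mem_filter] at hx
          exact Finset.mem_filter.2 ⟨hCasub hx.1, hx.2⟩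
        calc ((B j).card : ℝ) ≤ _ := by exact_mod_cast Finset.card_le_card hsub
          _ < ε * ((P a).card : ℝ) := hbig
          _ = ε * m := by rw [hPcard a]
      -- find a good vertex
      have hNcard : (N.card : ℝ) ≤ ℓ := by
        have h : N.card ≤ ℓ := le_trans (Finset.card_le_univ N) (le_of_eq (Fintype.card_fin ℓ))
        exact_mod_cast h
      have hbiUnion : ((N.biUnion B).card : ℝ) < ((C a).card : ℝ) := by
        have h1 : ((N.biUnion B).card : ℝ) ≤ ∑ j ∈ N, ((B j).card : ℝ) := by
          exact_mod_cast Finset.card_biUnion_le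
        have h2 : ∑ j ∈ N, ((B j).card : ℝ) ≤ N.card * (ε * m) := by
          calc ∑ j ∈ N, ((B j).card : ℝ) ≤ ∑ _j ∈ N, ε * m :=
              Finset.sum_le_sum fun j hj => (hBsmall j hj).le
            _ = N.card * (ε * m) := by rw [Finset.sum_const, nsmul_eq_mul]
        have h3 : ((ℓ : ℝ) + 1) * ε * m ≤ ((C a).card : ℝ) := by
          obtain ⟨-, hc, -⟩ := hφ3 a ha
          have hk : (S.filter (F.Adj a)).card ≤ ℓ := by
            calc (S.filter (F.Adj a)).card ≤ S.card := Finset.card_filter_le _ _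
              _ ≤ Fintype.card (Fin ℓ) := Finset.card_le_univ S
              _ = ℓ := Fintype.card_fin ℓ
          have := hClow _ hk
          nlinarith
        nlinarith [mul_pos hε0 hmpos]
      have hex : ∃ x ∈ C a, x ∉ N.biUnion B := by
        by_contra hcon
        push_neg at hcon
        have : (C a).card ≤ (N.biUnion B).card := Finset.card_le_card hcon
        have : ((C a).card : ℝ) ≤ ((N.biUnion B).card : ℝ) := by exact_mod_cast this
        linarith
      obtain ⟨x, hxC, hxgood⟩ := hex
      -- build new embedding
      refine ⟨Function.update φ a x,
        fun j => if F.Adj a j then (C j).filter fun y => H.Adj x y else C j, ?_, ?_, ?_⟩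
      · intro i
        by_cases hi : i = a
        · subst hi
          rw [Function.update_self]
          obtain ⟨hCa, -, -⟩ := hφ3 i ha
          exact (hPmem i x).1 (hCa hxC)
        · rw [Function.update_of_ne hi]; exact hφ1 i
      · intro i hi j hj hadj
        rcases Finset.mem_insert.1 hi with rfl | hiS
        · rcases Finset.mem_insert.1 hj with rfl | hjS
          · exact absurd hadj (F.loopless.irrefl _)
          · rw [Function.update_self, Function.update_of_ne (by rintro rfl; exact ha hjS)]
            obtain ⟨-, -, h3⟩ := hφ3 _ ha
            exact (h3 j hjS (F.adj_symm hadj) x hxC).symm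
        · rcases Finset.mem_insert.1 hj with rfl | hjS
          · rw [Function.update_self, Function.update_of_ne (by rintro rfl; exact ha hiS)]
            obtain ⟨-, -, h3⟩ := hφ3 _ ha
            exact h3 i hiS hadj x hxC
          · rw [Function.update_of_ne (by rintro rfl; exact ha hiS),
              Function.update_of_ne (by rintro rfl; exact ha hjS)]
            exact hφ2 i hiS j hjS hadj
      · intro j hj
        have hjS : j ∉ S := fun h => hj (Finset.mem_insert_of_mem h)
        have hja : j ≠ a := fun h => hj (h ▸ Finset.mem_insert_self a S)
        obtain ⟨hCsub, hCcard, hCadj⟩ := hφ3 j hjS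
        by_cases hadj : F.Adj a j
        · have hjN : j ∈ N := by
            rw [hNdef, Finset.mem_filter]
            exact ⟨Finset.mem_univ j, hadj, hj⟩
          have hxB : x ∉ B j := fun h => hxgood (Finset.mem_biUnion.2 ⟨j, hjN, h⟩)
          have hxdeg : δ * ((C j).card : ℝ) ≤ (((C j).filter fun y => H.Adj x y).card : ℝ) := by
            by_contra hcon
            push_neg at hcon
            exact hxB (Finset.mem_filter.2 ⟨hxC, hcon⟩)
          simp only [if_pos hadj]
          refine ⟨(Finset.filter_subset _ _).trans hCsub, ?_, ?_⟩
          · have hcount : ((insert a S).filter (F.Adj j)).card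
                = (S.filter (F.Adj j)).card + 1 := by
              rw [Finset.filter_insert, if_pos (F.adj_symm hadj),
                Finset.card_insert_of_notMem (fun h => ha (Finset.mem_filter.1 h).1)]
            rw [hcount, pow_succ]
            calc δ ^ (S.filter (F.Adj j)).card * δ * m
                = δ * (δ ^ (S.filter (F.Adj j)).card * m) := by ring
              _ ≤ δ * ((C j).card : ℝ) := by nlinarith
              _ ≤ _ := hxdeg
          · intro i hi hadji y hy
            have hyC : y ∈ (C j).filter fun y => H.Adj x y := hy
            rcases Finset.mem_insert.1 hi with rfl | hiS
            · rw [Function.update_self]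
              exact (Finset.mem_filter.1 hyC).2
            · rw [Function.update_of_ne (by rintro rfl; exact ha hiS)]
              exact hCadj i hiS hadji y (Finset.mem_filter.1 hyC).1
        · simp only [if_neg hadj]
          refine ⟨hCsub, ?_, ?_⟩
          · have hcount : ((insert a S).filter (F.Adj j)).card = (S.filter (F.Adj j)).card := by
              rw [Finset.filter_insert, if_neg (fun h => hadj (F.adj_symm h))]
            rw [hcount]; exact hCcard
          · intro i hi hadji y hy
            rcases Finset.mem_insert.1 hi with rfl | hiS
            · exact absurd hadji hadj
            · rw [Function.update_of_ne (by rintro rfl; exact ha hiS)]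
              exact hCadj i hiS hadji y hy
  obtain ⟨φ, C, h1, h2, -⟩ := key Finset.univ
  exact ⟨φ, h1, fun i j hadj => h2 i (Finset.mem_univ i) j (Finset.mem_univ j) hadj⟩
end
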